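/- The reversal map r is an automorphism of the graph Γ = Cay(V,S₂), it has order 2 (r ∘ r = id and r ≠ id), and it interchanges only non-adjacent vertices: for every v ∈ V with r(v) ≠ v, the vertices v and r(v) are not adjacent in Γ. -/

import Mathlib

open SimpleGraph Polynomial Matrix

/-- `V` is the 5-dimensional vector space over `GF(3)`. -/
abbrev V : Type := Fin 5 → ZMod 3

/-- The specific parity-check matrix of the ternary Golay code. -/
def H : Matrix (Fin 5) (Fin 11) (ZMod 3) :=
  !![1,1,1,2,2,0,1,0,0,0,0;
     1,1,2,1,0,2,0,1,0,0,0;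
     1,2,1,0,1,2,0,0,1,0,0;
     1,2,0,1,2,1,0,0,0,1,0;
     1,0,2,2,1,1,0,0,0,0,1]

/-- `S₂ = {±x₁, …, ±x₁₁}` where `x₁, …, x₁₁` are the columns of `H`. -/
def S2 : Set V := {v | ∃ j : Fin 11, v = (fun i => H i j) ∨ v = -(fun i => H i j)}

instance : DecidablePred (· ∈ S2) := fun v =>
  decidable_of_iff (∃ j : Fin 11, v = (fun i => H i j) ∨ v = -(fun i => H i j)) Iff.rfl

/-- The reversal map sending `(a,b,c,d,e)` to `(e,d,c,b,a)`. -/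
def r (v : V) : V := fun i => v i.rev

/-- The Berlekamp–Van Lint–Seidel graph `Γ = Cay(V, S₂)`:
`u` is adjacent to `v` iff `u ≠ v` and `u - v ∈ S₂`. -/
def Γ : SimpleGraph V where
  Adj u v := u ≠ v ∧ u - v ∈ S2
  symm := ⟨by
    rintro u v ⟨hne, j, hj⟩
    refine ⟨hne.symm, j, ?_⟩
    rcases hj with h | h
    · right; rw [← neg_sub, h]
    · left; rw [← neg_sub, h, neg_neg]⟩
  loopless := ⟨fun v h => h.1 rfl⟩

instance : DecidableRel Γ.Adj := fun u v =>
  decidable_of_iff (u ≠ v ∧ u - v ∈ S2) Iff.rfl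


set_option maxRecDepth 10000

lemma rr (v : V) : r (r v) = v := by
  funext i; simp [r, Fin.rev_rev]

lemma r_sub (u v : V) : r (u - v) = r u - r v := rfl

lemma r_mem_S2 : ∀ v : V, v ∈ S2 → r v ∈ S2 := by decide

lemma nonadj : ∀ v : V, r v ≠ v → v - r v ∉ S2 := by decide

/-- The reversal map `r` is an automorphism of `Γ = Cay(V, S₂)` of order 2
that interchanges only non-adjacent vertices. -/
theorem reversal_is_order_two_automorphism_interchanging_only_nonadjacent :
    (∀ u v : V, Γ.Adj (r u) (r v) ↔ Γ.Adj u v) ∧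
    (r ∘ r = id) ∧ (r ≠ id) ∧
    (∀ v : V, r v ≠ v → ¬ Γ.Adj v (r v)) := by
  refine ⟨?_, ?_, ?_, ?_⟩
  · intro u v
    constructor
    · rintro ⟨hne, hm⟩
      refine ⟨fun h => hne (by rw [h]), ?_⟩
      have := r_mem_S2 _ hm
      rwa [← r_sub, rr] at this
    · rintro ⟨hne, hm⟩
      refine ⟨fun h => hne (by rw [← rr u, h, rr]), ?_⟩
      rw [← r_sub]
      exact r_mem_S2 _ hm
  · funext v; exact rr v
  · intro h
    exact (show r (fun i : Fin 5 => (i : ZMod 3)) 0 ≠ (fun i : Fin 5 => (i : ZMod 3)) 0 by decide)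
      (congrFun (congrFun h _) 0)
  · intro v hv hadj
    exact nonadj v hv hadj.2
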